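/- Let θ, θ' ∈ ℝ^Y and π_θ = softmax(θ), π_{θ'} = softmax(θ'). Then ‖π_θ - π_{θ'}‖₁ ≤ ‖θ - θ'‖_span ≤ ‖θ - θ'‖₂, where ‖x‖_span = (max_y x_y - min_y x_y)/2. -/

import Mathlib

open Finset

/-- Softmax parametrization of a distribution over a finite set. -/
noncomputable def softmax {Y : Type*} [Fintype Y] (θ : Y → ℝ) : Y → ℝ :=
  fun y => Real.exp (θ y) / ∑ y', Real.exp (θ y')

/-- Span seminorm: `‖x‖_span = inf_c ‖x + c·1‖_∞` (sup norm on functions). -/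
noncomputable def spanNorm {Y : Type*} [Fintype Y] (x : Y → ℝ) : ℝ :=
  ⨅ c : ℝ, ‖(fun y => x y + c : Y → ℝ)‖

private lemma key_exp (s : ℝ) (hs : 0 ≤ s) : 2 * (Real.exp s - 1) ≤ s * (Real.exp s + 1) := by
  have h1 : ∀ x : ℝ, HasDerivAt (fun x => (x - 1) * Real.exp x + 1) (x * Real.exp x) x := by
    intro x
    have h := (((hasDerivAt_id x).sub_const 1).mul (Real.hasDerivAt_exp x)).add_const 1
    refine h.congr_deriv ?_
    simp only [id_eq]; ring
  have h2 : ∀ x : ℝ, HasDerivAt (fun x => x * (Real.exp x + 1) - 2 * (Real.exp x - 1))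
      ((x - 1) * Real.exp x + 1) x := by
    intro x
    have h := ((hasDerivAt_id x).mul ((Real.hasDerivAt_exp x).add_const 1)).sub
      (((Real.hasDerivAt_exp x).sub_const 1).const_mul 2)
    refine h.congr_deriv ?_
    simp only [id_eq]; ring
  have mono1 : MonotoneOn (fun x => (x - 1) * Real.exp x + 1) (Set.Ici 0) := by
    apply monotoneOn_of_deriv_nonneg (convex_Ici 0)
    · exact Continuous.continuousOn (by continuity)
    · intro x hx; exact (h1 x).differentiableAt.differentiableWithinAt
    · intro x hx
      rw [interior_Ici, Set.mem_Ioi] at hx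
      rw [(h1 x).deriv]
      positivity
  have g_nonneg : ∀ x : ℝ, 0 ≤ x → 0 ≤ (x - 1) * Real.exp x + 1 := by
    intro x hx
    have := mono1 Set.self_mem_Ici (Set.mem_Ici.2 hx) hx
    simpa using this
  have mono2 : MonotoneOn (fun x => x * (Real.exp x + 1) - 2 * (Real.exp x - 1)) (Set.Ici 0) := by
    apply monotoneOn_of_deriv_nonneg (convex_Ici 0)
    · exact Continuous.continuousOn (by continuity)
    · intro x hx; exact (h2 x).differentiableAt.differentiableWithinAt
    · intro x hx
      rw [interior_Ici, Set.mem_Ioi] at hx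
      rw [(h2 x).deriv]
      exact g_nonneg x hx.le
  have := mono2 Set.self_mem_Ici (Set.mem_Ici.2 hs) hs
  simp at this
  linarith

private lemma softmax_add_const {Y : Type*} [Fintype Y] (θ : Y → ℝ) (c : ℝ) :
    softmax (fun y => θ y + c) = softmax θ := by
  funext y
  simp only [softmax, Real.exp_add]
  rw [← Finset.sum_mul, mul_div_mul_right _ _ (Real.exp_ne_zero c)]

private lemma softmax_l1_le {Y : Type*} [Fintype Y] (θ' z : Y → ℝ) (s : ℝ)
    (hs : 0 ≤ s) (hz : ∀ y, |z y| ≤ s) :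
    ∑ y, |softmax (fun y => θ' y + z y) y - softmax θ' y| ≤ s := by
  cases isEmpty_or_nonempty Y with
  | inl h => simpa using hs
  | inr h =>
  rcases hs.eq_or_lt with rfl | hs'
  · have hz0 : ∀ y, z y = 0 := fun y => abs_nonpos_iff.mp (hz y)
    have : (fun y => θ' y + z y) = θ' := by funext y; rw [hz0 y, add_zero]
    simp [this]
  set E : ℝ := ∑ y, Real.exp (θ' y) with hE_def
  have hE : 0 < E := Finset.sum_pos (fun y _ => Real.exp_pos _) Finset.univ_nonempty
  set p : Y → ℝ := fun y => Real.exp (θ' y) / E with hp_def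
  have hp_pos : ∀ y, 0 < p y := fun y => div_pos (Real.exp_pos _) hE
  have hp_sum : ∑ y, p y = 1 := by
    rw [hp_def]
    rw [← Finset.sum_div]
    field_simp
    exact hE_def.symm
  set v : Y → ℝ := fun y => Real.exp (z y) with hv_def
  set D : ℝ := ∑ y, p y * v y with hD_def
  have hv_pos : ∀ y, 0 < v y := fun y => Real.exp_pos _
  have hD_pos : 0 < D :=
    Finset.sum_pos (fun y _ => mul_pos (hp_pos y) (hv_pos y)) Finset.univ_nonempty
  set a : ℝ := Real.exp (-s) with ha_def
  set b : ℝ := Real.exp s with hb_def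
  have hab : a * b = 1 := by rw [ha_def, hb_def, ← Real.exp_add]; simp
  have ha_pos : 0 < a := Real.exp_pos _
  have hb_one : 1 < b := by rw [hb_def]; exact Real.one_lt_exp_iff.mpr hs'
  have hav : ∀ y, a ≤ v y := fun y =>
    Real.exp_le_exp.mpr (neg_le_of_abs_le (hz y))
  have hvb : ∀ y, v y ≤ b := fun y => Real.exp_le_exp.mpr (le_of_abs_le (hz y))
  have haD : a ≤ D := by
    calc a = ∑ y, p y * a := by rw [← Finset.sum_mul, hp_sum, one_mul]
    _ ≤ D := Finset.sum_le_sum fun y _ =>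
        mul_le_mul_of_nonneg_left (hav y) (hp_pos y).le
  have hDb : D ≤ b := by
    calc D ≤ ∑ y, p y * b := Finset.sum_le_sum fun y _ =>
        mul_le_mul_of_nonneg_left (hvb y) (hp_pos y).le
    _ = b := by rw [← Finset.sum_mul, hp_sum, one_mul]
  have hab' : a < b := lt_trans (by nlinarith) hb_one
  -- rewrite softmaxes
  have hsm' : ∀ y, softmax θ' y = p y := fun y => rfl
  have hsm : ∀ y, softmax (fun y => θ' y + z y) y = p y * v y / D := by
    intro y
    have hden : ∑ y', Real.exp (θ' y' + z y') = E * D := by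
      rw [hD_def, Finset.mul_sum]
      refine Finset.sum_congr rfl fun y' _ => ?_
      rw [Real.exp_add]
      simp only [hp_def, hv_def]
      field_simp
    show Real.exp (θ' y + z y) / (∑ y', Real.exp (θ' y' + z y')) = p y * v y / D
    rw [hden, Real.exp_add]
    simp only [hp_def, hv_def]
    rw [div_mul_eq_mul_div, div_div]
  have habs : ∀ y, |softmax (fun y => θ' y + z y) y - softmax θ' y|
      = p y * |v y - D| / D := by
    intro y
    rw [hsm y, hsm' y,
      show p y * v y / D - p y = p y * (v y - D) / D by field_simp]
    rw [abs_div, abs_of_pos hD_pos, abs_mul, abs_of_pos (hp_pos y)]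
  rw [Finset.sum_congr rfl fun y _ => habs y]
  rw [← Finset.sum_div, div_le_iff₀ hD_pos]
  -- Step 1: sum of abs = 2 * sum of positive parts
  have step1 : ∑ y, p y * |v y - D| = 2 * ∑ y, p y * max (v y - D) 0 := by
    have : ∀ y, p y * |v y - D| = 2 * (p y * max (v y - D) 0) - p y * (v y - D) := by
      intro y
      have habs2 : |v y - D| = 2 * max (v y - D) 0 - (v y - D) := by
        rcases le_total (v y - D) 0 with h | h
        · rw [abs_of_nonpos h, max_eq_right h]; ring
        · rw [abs_of_nonneg h, max_eq_left h]; ring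
      rw [habs2]; ring
    rw [Finset.sum_congr rfl fun y _ => this y, Finset.sum_sub_distrib]
    have : ∑ y, p y * (v y - D) = 0 := by
      simp only [mul_sub]
      rw [Finset.sum_sub_distrib, ← hD_def, ← Finset.sum_mul, hp_sum, one_mul, sub_self]
    rw [this, ← Finset.mul_sum]
    ring
  rw [step1]
  -- Step 2: pointwise bound on positive part
  have step2 : ∀ y, p y * max (v y - D) 0 ≤ p y * ((b - D) * (v y - a) / (b - a)) := by
    intro y
    apply mul_le_mul_of_nonneg_left _ (hp_pos y).le
    rw [le_div_iff₀ (by linarith)]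
    rcases le_total (v y) D with h | h
    · rw [max_eq_right (by linarith)]
      have h1 : 0 ≤ b - D := by linarith
      have h2 : 0 ≤ v y - a := by linarith [hav y]
      nlinarith
    · rw [max_eq_left (by linarith)]
      nlinarith [hvb y, hav y, mul_nonneg (sub_nonneg.2 (hvb y)) (sub_nonneg.2 haD)]
  have step3 : ∑ y, p y * ((b - D) * (v y - a) / (b - a)) = (b - D) * (D - a) / (b - a) := by
    rw [Finset.sum_congr rfl fun y _ =>
      show p y * ((b - D) * (v y - a) / (b - a)) = p y * ((b - D) * (v y - a)) / (b - a) by ring]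
    rw [← Finset.sum_div]
    congr 1
    have : ∑ y, p y * ((b - D) * (v y - a)) = (b - D) * (∑ y, p y * v y - (∑ y, p y) * a) := by
      rw [Finset.sum_mul, ← Finset.sum_sub_distrib, Finset.mul_sum]
      exact Finset.sum_congr rfl fun y _ => by ring
    rw [this, hp_sum, ← hD_def]
    ring
  have step4 : 2 * ((b - D) * (D - a) / (b - a)) ≤ s * D := by
    rw [show 2 * ((b - D) * (D - a) / (b - a)) = 2 * ((b - D) * (D - a)) / (b - a) by ring]
    rw [div_le_iff₀ (by linarith : (0:ℝ) < b - a)]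
    have hkey := key_exp s hs
    rw [← hb_def] at hkey
    -- 2 * (b - 1) ≤ s * (b + 1), a * b = 1, a ≤ D ≤ b, 0 < D
    -- first: (b - D) * (D - a) ≤ D * (b - 1) * (1 - a)  [uses a*b = 1, (D-1)^2 ≥ 0]
    have h5 : (b - D) * (D - a) ≤ D * ((b - 1) * (1 - a)) := by nlinarith [sq_nonneg (D - 1)]
    -- second: 2 * (b - 1) * (1 - a) ≤ s * (b - a)
    have h6 : 2 * ((b - 1) * (1 - a)) ≤ s * (b - a) := by
      have e1 : 1 - a = a * (b - 1) := by nlinarith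
      have e2 : b - a = a * ((b - 1) * (b + 1)) := by nlinarith
      rw [e1, e2]
      calc 2 * ((b - 1) * (a * (b - 1))) = a * (b - 1) * (2 * (b - 1)) := by ring
      _ ≤ a * (b - 1) * (s * (b + 1)) := by
          apply mul_le_mul_of_nonneg_left hkey
          exact mul_nonneg ha_pos.le (by linarith)
      _ = s * (a * ((b - 1) * (b + 1))) := by ring
    have h7 := mul_le_mul_of_nonneg_left h6 hD_pos.le
    nlinarith
  calc 2 * ∑ y, p y * max (v y - D) 0
      ≤ 2 * ∑ y, p y * ((b - D) * (v y - a) / (b - a)) := by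
        apply mul_le_mul_of_nonneg_left _ (by norm_num)
        exact Finset.sum_le_sum fun y _ => step2 y
    _ = 2 * ((b - D) * (D - a) / (b - a)) := by rw [step3]
    _ ≤ s * D := step4

theorem stmt18 {Y : Type*} [Fintype Y] (θ θ' : Y → ℝ) :
    (∑ y, |softmax θ y - softmax θ' y|)
        ≤ spanNorm (fun y => θ y - θ' y) ∧
    spanNorm (fun y => θ y - θ' y) ≤ Real.sqrt (∑ y, (θ y - θ' y) ^ 2) := by
  constructor
  · apply le_ciInf
    intro c
    set s : ℝ := ‖(fun y => θ y - θ' y + c : Y → ℝ)‖ with hs_def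
    have hs : 0 ≤ s := norm_nonneg _
    have hz : ∀ y, |θ y - θ' y + c| ≤ s := by
      intro y
      have := norm_le_pi_norm (fun y => θ y - θ' y + c : Y → ℝ) y
      simpa [Real.norm_eq_abs] using this
    have key := softmax_l1_le θ' (fun y => θ y - θ' y + c) s hs hz
    have heq : (fun y => θ' y + (θ y - θ' y + c)) = (fun y => θ y + c) := by
      funext y; ring
    rw [heq, softmax_add_const] at key
    exact key
  · have h0 : spanNorm (fun y => θ y - θ' y) ≤ ‖(fun y => θ y - θ' y : Y → ℝ)‖ := by
      have := ciInf_le (f := fun c : ℝ => ‖(fun y => θ y - θ' y + c : Y → ℝ)‖)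
        ⟨0, by rintro x ⟨c, rfl⟩; exact norm_nonneg _⟩ 0
      simpa [spanNorm] using this
    refine h0.trans ?_
    rw [pi_norm_le_iff_of_nonneg (Real.sqrt_nonneg _)]
    intro y
    rw [Real.norm_eq_abs, ← Real.sqrt_sq_eq_abs]
    apply Real.sqrt_le_sqrt
    exact Finset.single_le_sum (f := fun y => (θ y - θ' y) ^ 2) (fun y _ => sq_nonneg _) (Finset.mem_univ y)
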